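/- Let X be a countably infinite set and let E be a contraction (a set function with E(Z) ⊆ Z for every finite Z ⊆ X). Then the lexicographic composition L_E preserves path independence over the class C^res of responsive choice functions if and only if the set function I\E, defined by (I\E)(Z) = Z \ E(Z), is cardinal-linear. -/

import Mathlib

/-! Common definitions: choice functions on a countably infinite set of items,
lexicographic composition subject to an exclusion function, and the various
properties from the paper. Items form a type `X`; finite subsets of `X` are
`Finset X`; set functions are maps `Finset X → Set X`. -/

open scoped Classical

variable {X : Type*}

/-- A choice function selects a subset of its input. -/
def IsChoice (C : Finset X → Finset X) : Prop := ∀ Y, C Y ⊆ Y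

/-- Lexicographic composition of `C1` and `C2` subject to the exclusion
function `E`:  `Y ↦ C1(Y) ∪ C2(Y \ E(C1(Y)))`. -/
noncomputable def lexComp (E : Finset X → Set X) (C1 C2 : Finset X → Finset X) :
    Finset X → Finset X :=
  fun Y => C1 Y ∪ C2 (Y.filter (fun y => y ∉ E (C1 Y)))

/-- Path independence: `C(Y ∪ Y') = C(C(Y) ∪ C(Y'))`. -/
def PathIndependent (C : Finset X → Finset X) : Prop :=
  ∀ Y Y' : Finset X, C (Y ∪ Y') = C (C Y ∪ C Y')

/-- Substitutes: the rejection function is monotone. -/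
def Substitutes (C : Finset X → Finset X) : Prop :=
  ∀ Y Y' : Finset X, Y ⊆ Y' → Y \ C Y ⊆ Y' \ C Y'

/-- Size monotonicity (law of aggregate demand). -/
def SizeMonotonic (C : Finset X → Finset X) : Prop :=
  ∀ Y Y' : Finset X, Y ⊆ Y' → (C Y).card ≤ (C Y').card

/-- Consistency: `C(Y') ⊆ Y ⊆ Y'` implies `C(Y) = C(Y')`. -/
def Consistent (C : Finset X → Finset X) : Prop :=
  ∀ Y Y' : Finset X, C Y' ⊆ Y → Y ⊆ Y' → C Y = C Y'

/-- The `q` highest-ranked acceptable elements of `Y`, with respect to a linear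
order `r` on `X ∪ {∅}` (modelled as `Option X`, `none` playing the role of the
outside option `∅`): `y` is chosen iff `y ≻ ∅` and fewer than `q` acceptable
elements of `Y` are ranked strictly above `y`. -/
noncomputable def topChoice (r : LinearOrder (Option X)) (q : ℕ) (Y : Finset X) : Finset X :=
  Y.filter (fun y => r.lt none (some y) ∧
    (Y.filter (fun z => r.lt none (some z) ∧ r.lt (some y) (some z))).card < q)

/-- `C` is responsive to the linear order `r` on `X ∪ {∅}` and quota `q`. -/
def ResponsiveWith (r : LinearOrder (Option X)) (q : ℕ) (C : Finset X → Finset X) : Prop :=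
  ∀ Y : Finset X, C Y = topChoice r q Y

/-- Responsive choice functions (the class `C^res`). -/
def Responsive (C : Finset X → Finset X) : Prop :=
  ∃ (r : LinearOrder (Option X)) (q : ℕ), ResponsiveWith r q C

/-- Single-valued responsive choice functions (the class `C^{sv-res}`): quota 1. -/
def SVResponsive (C : Finset X → Finset X) : Prop :=
  ∃ r : LinearOrder (Option X), ResponsiveWith r 1 C

/-- `E` is threshold-linear with cardinal reuse with respect to the parameters
`t ∈ ℕ ∪ {0,∞}`, `K ⊆ X` and the chain `∅ = T^0 ⊆ T^1 ⊆ ⋯ ⊆ T^t ⊆ X \ K`: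
for every finite `Z`, if `|Z| < t` then `E(Z) = (Z \ T^{|Z|}) ∪ K`, and
otherwise `G_E(Z) = E(Z) ∪ Z = X`. -/
def TLCRWith (E : Finset X → Set X) (t : ℕ∞) (K : Set X) (T : ℕ → Set X) : Prop :=
  T 0 = ∅ ∧ (∀ n : ℕ, (n : ℕ∞) < t → T n ⊆ T (n + 1)) ∧
  (∀ n : ℕ, (n : ℕ∞) ≤ t → T n ⊆ Kᶜ) ∧
  ∀ Z : Finset X,
    ((Z.card : ℕ∞) < t → E Z = ((Z : Set X) \ T Z.card) ∪ K) ∧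
    (¬ (Z.card : ℕ∞) < t → E Z ∪ (Z : Set X) = Set.univ)

/-- `E` is threshold-linear with cardinal reuse (for some parameters). -/
def TLCR (E : Finset X → Set X) : Prop :=
  ∃ (t : ℕ∞) (K : Set X) (T : ℕ → Set X), TLCRWith E t K T

/-- A dilation `D` is threshold-linear (with threshold `t`), where `K = D(∅)`:
`D(Z) = Z ∪ K` when `|Z| < t`, and `D(Z) = X` otherwise. -/
def ThresholdLinear (D : Finset X → Set X) : Prop :=
  ∃ t : ℕ∞, ∀ Z : Finset X,
    ((Z.card : ℕ∞) < t → D Z = (Z : Set X) ∪ D ∅) ∧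
    (¬ (Z.card : ℕ∞) < t → D Z = Set.univ)

/-- A set function `F` (valued inside its argument) is cardinal-linear:
there is a weakly increasing sequence `∅ = T^0 ⊆ T^1 ⊆ ⋯` with
`F(Z) = Z ∩ T^{|Z|}` for every finite `Z`. -/
def CardinalLinear (F : Finset X → Set X) : Prop :=
  ∃ T : ℕ → Set X, T 0 = ∅ ∧ Monotone T ∧
    ∀ Z : Finset X, F Z = (Z : Set X) ∩ T Z.card

section Equiv

variable (s : Setoid X)

/-- A finite set is feasible if it contains at most one element of each
equivalence class. -/
def Feasible (Z : Finset X) : Prop :=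
  ∀ x ∈ Z, ∀ z ∈ Z, x ≠ z → ¬ s.r x z

/-- A choice function is many-to-one if it always selects a feasible set. -/
def ManyToOne (C : Finset X → Finset X) : Prop :=
  ∀ Y : Finset X, Feasible s (C Y)

/-- `I_Z`: the union of the equivalence classes of the members of `Z`. -/
def IClass (Z : Finset X) : Set X := {y | ∃ x ∈ Z, s.r y x}

/-- `E` is equivalence-excluding: `Z ∪ E(Z) ⊇ I_Z` for every feasible `Z`. -/
def EquivExcluding (E : Finset X → Set X) : Prop :=
  ∀ Z : Finset X, Feasible s Z → IClass s Z ⊆ (Z : Set X) ∪ E Z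

/-- `Cbar` completes `C`: whenever `Cbar(Y)` is feasible, `Cbar(Y) = C(Y)`. -/
def Completes (Cbar C : Finset X → Finset X) : Prop :=
  ∀ Y : Finset X, Feasible s (Cbar Y) → Cbar Y = C Y

/-- `E` is many-to-one threshold-linear with cardinal reuse with the parameters
`t`, `K`, `{T^n}`: the displayed condition holds for every *feasible* `Z`:
if `Z ∪ K ≠ X` and `|Z| < t` then `E(Z) = (Z \ T^{|Z|}) ∪ K`, and otherwise
`G_E(Z) = X`. -/
def MtoTLCRWith (E : Finset X → Set X) (t : ℕ∞) (K : Set X) (T : ℕ → Set X) : Prop :=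
  T 0 = ∅ ∧ (∀ n : ℕ, (n : ℕ∞) < t → T n ⊆ T (n + 1)) ∧
  (∀ n : ℕ, (n : ℕ∞) ≤ t → T n ⊆ Kᶜ) ∧
  ∀ Z : Finset X, Feasible s Z →
    (((Z : Set X) ∪ K ≠ Set.univ ∧ (Z.card : ℕ∞) < t) →
      E Z = ((Z : Set X) \ T Z.card) ∪ K) ∧
    (¬ ((Z : Set X) ∪ K ≠ Set.univ ∧ (Z.card : ℕ∞) < t) →
      E Z ∪ (Z : Set X) = Set.univ)

end Equiv


section Helpers
variable {X : Type*}

lemma mem_topChoice (r : LinearOrder (Option X)) {q : ℕ} {Y : Finset X} {v : X} :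
    v ∈ topChoice r q Y ↔ v ∈ Y ∧ r.lt none (some v) ∧
      (Y.filter (fun z => r.lt none (some z) ∧ r.lt (some v) (some z))).card < q := by
  simp [topChoice]

lemma topChoice_subset (r : LinearOrder (Option X)) (q : ℕ) (Y : Finset X) :
    topChoice r q Y ⊆ Y := Finset.filter_subset _ _

lemma topChoice_restrict (r : LinearOrder (Option X)) {q : ℕ} {Y Y' : Finset X} {v : X}
    (h : Y ⊆ Y') (hv : v ∈ topChoice r q Y') (hvY : v ∈ Y) : v ∈ topChoice r q Y := by
  rw [mem_topChoice] at hv ⊢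
  exact ⟨hvY, hv.2.1, lt_of_le_of_lt (Finset.card_le_card (Finset.filter_subset_filter _ h)) hv.2.2⟩

lemma card_topChoice (r : LinearOrder (Option X)) (q : ℕ) (Y : Finset X) :
    (topChoice r q Y).card = min q (Y.filter (fun y => r.lt none (some y))).card := by
  letI := r
  set A : Finset X := Y.filter (fun y => r.lt none (some y)) with hA
  set f : X → ℕ := fun v => (A.filter (fun z => (some v : Option X) < some z)).card with hf
  have htc : topChoice r q Y = A.filter (fun v => f v < q) := by
    ext v
    simp only [mem_topChoice, hA, hf, Finset.mem_filter, Finset.filter_filter]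
  have hanti : ∀ a ∈ A, ∀ b ∈ A, (some a : Option X) < some b → f b < f a := by
    intro a _ b hb hab
    apply Finset.card_lt_card
    constructor
    · intro z hz
      rw [Finset.mem_filter] at hz ⊢
      exact ⟨hz.1, hab.trans hz.2⟩
    · intro hsub
      have : b ∈ A.filter (fun z => (some b : Option X) < some z) :=
        hsub (Finset.mem_filter.2 ⟨hb, hab⟩)
      exact absurd (Finset.mem_filter.1 this).2 (lt_irrefl _)
  have hinj : Set.InjOn f A := by
    intro a ha b hb hab
    by_contra hne
    have hne' : (some a : Option X) ≠ some b := by simpa using hne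
    rcases lt_or_gt_of_ne hne' with hlt | hlt
    · exact absurd hab (hanti a ha b hb hlt).ne'
    · exact absurd hab (hanti b hb a ha hlt).ne
  have hlt : ∀ a ∈ A, f a < A.card := by
    intro a ha
    have hsub : A.filter (fun z => (some a : Option X) < some z) ⊆ A.erase a := by
      intro z hz
      rw [Finset.mem_filter] at hz
      refine Finset.mem_erase.2 ⟨fun h => ?_, hz.1⟩
      subst h; exact absurd hz.2 (lt_irrefl _)
    calc f a ≤ (A.erase a).card := Finset.card_le_card hsub
    _ < A.card := Finset.card_erase_lt_of_mem ha
  have himg : A.image f = Finset.range A.card := by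
    apply Finset.eq_of_subset_of_card_le
    · intro m hm
      rcases Finset.mem_image.1 hm with ⟨a, ha, rfl⟩
      exact Finset.mem_range.2 (hlt a ha)
    · rw [Finset.card_range, Finset.card_image_of_injOn hinj]
  rw [htc]
  have h1 : (A.filter (fun v => f v < q)).card = ((A.image f).filter (fun m => m < q)).card := by
    rw [Finset.filter_image]
    exact (Finset.card_image_of_injOn (hinj.mono (Finset.filter_subset _ _))).symm
  rw [h1, himg]
  have h2 : (Finset.range A.card).filter (fun m => m < q) = Finset.range (min q A.card) := by
    ext m; simp only [Finset.mem_filter, Finset.mem_range, lt_min_iff]; tauto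
  rw [h2, Finset.card_range]

lemma topChoice_card_mono (r : LinearOrder (Option X)) (q : ℕ) {Y Y' : Finset X} (h : Y ⊆ Y') :
    (topChoice r q Y).card ≤ (topChoice r q Y').card := by
  rw [card_topChoice, card_topChoice]
  exact min_le_min le_rfl (Finset.card_le_card (Finset.filter_subset_filter _ h))

lemma topChoice_consistent (r : LinearOrder (Option X)) {q : ℕ} {Y Y' : Finset X}
    (h1 : topChoice r q Y' ⊆ Y) (h2 : Y ⊆ Y') : topChoice r q Y = topChoice r q Y' := by
  refine (Finset.eq_of_subset_of_card_le (fun v hv => ?_) (topChoice_card_mono r q h2)).symm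
  exact topChoice_restrict r h2 hv (h1 hv)

-- mkOrder machinery
noncomputable def mkOrder (p : Option X → ℕ) (e : Option X → ℕ) (he : Function.Injective e) :
    LinearOrder (Option X) :=
  LinearOrder.lift' (fun o => toLex (p o, e o)) (by
    intro a b h
    apply he
    have := congrArg (fun x => (ofLex x).2) h
    simpa using this)

lemma mkOrder_lt_iff (p : Option X → ℕ) (e : Option X → ℕ) (he : Function.Injective e)
    (a b : Option X) :
    (mkOrder p e he).lt a b ↔ p a < p b ∨ (p a = p b ∧ e a < e b) := by
  show toLex (p a, e a) < toLex (p b, e b) ↔ _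
  rw [Prod.Lex.lt_iff]
  exact Iff.rfl

/-- If all acceptable elements fit within the quota, all are chosen. -/
lemma topChoice_eq_filter (r : LinearOrder (Option X)) {q : ℕ} {Y : Finset X}
    (h : (Y.filter (fun v => r.lt none (some v))).card ≤ q) :
    topChoice r q Y = Y.filter (fun v => r.lt none (some v)) := by
  letI := r
  ext v
  rw [mem_topChoice, Finset.mem_filter]
  constructor
  · rintro ⟨h1, h2, _⟩; exact ⟨h1, h2⟩
  · rintro ⟨h1, h2⟩
    refine ⟨h1, h2, lt_of_lt_of_le ?_ h⟩
    apply Finset.card_lt_card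
    constructor
    · intro z hz
      rw [Finset.mem_filter] at hz ⊢
      exact ⟨hz.1, hz.2.1⟩
    · intro hsub
      have : v ∈ Y.filter (fun z => (none : Option X) < some z ∧ (some v : Option X) < some z) :=
        hsub (Finset.mem_filter.2 ⟨h1, h2⟩)
      exact absurd (Finset.mem_filter.1 this).2.2 (lt_irrefl _)

lemma topChoice_eq_of_card_le (r : LinearOrder (Option X)) {q : ℕ} {Y : Finset X}
    (A : Finset X) (hA : ∀ v : X, v ∈ A ↔ v ∈ Y ∧ r.lt none (some v)) (hcard : A.card ≤ q) :
    topChoice r q Y = A := by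
  letI := r
  ext v
  rw [mem_topChoice]
  constructor
  · rintro ⟨h1, h2, _⟩
    exact (hA v).2 ⟨h1, h2⟩
  · intro hv
    obtain ⟨hvY, hvacc⟩ := (hA v).1 hv
    refine ⟨hvY, hvacc, ?_⟩
    have hsub : Y.filter (fun z => (none : Option X) < some z ∧ (some v : Option X) < some z)
        ⊆ A.erase v := by
      intro z hz
      rw [Finset.mem_filter] at hz
      refine Finset.mem_erase.2 ⟨fun h => ?_, (hA z).2 ⟨hz.1, hz.2.1⟩⟩
      subst h
      exact absurd hz.2.2 (lt_irrefl _)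
    have h1 := Finset.card_le_card hsub
    have h2 : (A.erase v).card = A.card - 1 := Finset.card_erase_of_mem hv
    have h3 : 1 ≤ A.card := Finset.card_pos.2 ⟨v, hv⟩
    omega


lemma lexComp_apply (E : Finset X → Set X) (C1 C2 : Finset X → Finset X) (Y : Finset X) :
    lexComp E C1 C2 Y = C1 Y ∪ C2 (Y.filter (fun y => y ∉ E (C1 Y))) := rfl


lemma lex_backward (E : Finset X → Set X)
    (hcontr : ∀ Z : Finset X, E Z ⊆ (Z : Set X))
    (T : ℕ → Set X) (hmono : Monotone T)
    (hT : ∀ Z : Finset X, (Z : Set X) \ E Z = (Z : Set X) ∩ T Z.card)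
    (r1 r2 : LinearOrder (Option X)) (q1 q2 : ℕ)
    (C1 C2 : Finset X → Finset X)
    (hC1 : ∀ Y, C1 Y = topChoice r1 q1 Y) (hC2 : ∀ Y, C2 Y = topChoice r2 q2 Y) :
    PathIndependent (lexComp E C1 C2) := by
  have hE : ∀ (Z : Finset X) (u : X), u ∉ E Z ↔ (u ∉ Z ∨ u ∈ T Z.card) := by
    intro Z u
    by_cases hu : u ∈ Z
    · have h1 : (u ∈ (Z : Set X) \ E Z) ↔ (u ∈ (Z : Set X) ∩ T Z.card) := by rw [hT]
      simp only [Set.mem_diff, Set.mem_inter_iff, Finset.mem_coe, hu, true_and] at h1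
      simp [hu, h1]
    · simp only [hu, not_false_iff, true_or, iff_true]
      exact fun h => hu (hcontr Z h)
  intro Y Y'
  set S1 := topChoice r1 q1 (Y ∪ Y') with hS1
  have hLunfold : ∀ W : Finset X, lexComp E C1 C2 W
      = C1 W ∪ C2 (W.filter (fun u => u ∉ E (C1 W))) := fun _ => rfl
  have hLsub : ∀ W : Finset X, lexComp E C1 C2 W ⊆ W := by
    intro W
    rw [hLunfold]
    apply Finset.union_subset
    · rw [hC1]; exact topChoice_subset _ _ _
    · rw [hC2]; exact (topChoice_subset _ _ _).trans (Finset.filter_subset _ _)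
  set W := lexComp E C1 C2 Y ∪ lexComp E C1 C2 Y' with hW
  have hWsub : W ⊆ Y ∪ Y' := Finset.union_subset_union (hLsub Y) (hLsub Y')
  have hS1W : S1 ⊆ W := by
    intro v hv
    have hvYY' : v ∈ Y ∪ Y' := topChoice_subset _ _ _ hv
    rcases Finset.mem_union.1 hvYY' with h | h
    · exact Finset.mem_union_left _ (Finset.mem_union_left _
        (by rw [hC1]; exact topChoice_restrict r1 Finset.subset_union_left hv h))
    · exact Finset.mem_union_right _ (Finset.mem_union_left _
        (by rw [hC1]; exact topChoice_restrict r1 Finset.subset_union_right hv h))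
  have hC1W : C1 W = S1 := by
    rw [hC1, hS1]; exact topChoice_consistent r1 hS1W hWsub
  have hC1U : C1 (Y ∪ Y') = S1 := hC1 _
  set B := (Y ∪ Y').filter (fun u => u ∉ E S1) with hB
  set B' := W.filter (fun u => u ∉ E S1) with hB'
  have hB'B : B' ⊆ B := Finset.filter_subset_filter _ hWsub
  -- key claim
  have hmain : ∀ Y0 : Finset X, Y0 ⊆ Y ∪ Y' → ∀ v, v ∈ topChoice r2 q2 B → v ∈ Y0 →
      v ∈ lexComp E C1 C2 Y0 := by
    intro Y0 hY0 v hv hvY0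
    rw [hLunfold]
    by_cases hc : v ∈ C1 Y0
    · exact Finset.mem_union_left _ hc
    · have hk0 : (C1 Y0).card ≤ S1.card := by
        rw [hC1, hS1]; exact topChoice_card_mono r1 q1 hY0
      have hA0B : Y0.filter (fun u => u ∉ E (C1 Y0)) ⊆ B := by
        intro u hu
        rw [Finset.mem_filter] at hu
        rw [hB, Finset.mem_filter]
        refine ⟨hY0 hu.1, ?_⟩
        rw [hE]
        by_cases hus : u ∈ S1
        · right
          have huC1 : u ∈ C1 Y0 := by
            rw [hC1]
            exact topChoice_restrict r1 hY0 (hS1 ▸ hus) hu.1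
          rcases (hE (C1 Y0) u).1 hu.2 with h | h
          · exact absurd huC1 h
          · exact hmono hk0 h
        · exact Or.inl hus
      have hvA0 : v ∈ Y0.filter (fun u => u ∉ E (C1 Y0)) :=
        Finset.mem_filter.2 ⟨hvY0, (hE (C1 Y0) v).2 (Or.inl hc)⟩
      refine Finset.mem_union_right _ ?_
      rw [hC2]
      exact topChoice_restrict r2 hA0B hv hvA0
  have hTCB' : topChoice r2 q2 B ⊆ B' := by
    intro v hv
    have hvB := topChoice_subset _ _ _ hv
    rw [hB, Finset.mem_filter] at hvB
    rw [hB', Finset.mem_filter]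
    refine ⟨?_, hvB.2⟩
    rcases Finset.mem_union.1 hvB.1 with h | h
    · exact Finset.mem_union_left _ (hmain Y Finset.subset_union_left v hv h)
    · exact Finset.mem_union_right _ (hmain Y' Finset.subset_union_right v hv h)
  have hC2eq : C2 B' = C2 B := by
    rw [hC2, hC2]
    exact topChoice_consistent r2 hTCB' hB'B
  rw [hLunfold (Y ∪ Y'), hLunfold W, hC1U, hC1W, ← hB, ← hB', hC2eq]

lemma topChoice_isChoice (r : LinearOrder (Option X)) (q : ℕ) : IsChoice (topChoice r q) :=
  fun Y => topChoice_subset r q Y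

lemma topChoice_responsive (r : LinearOrder (Option X)) (q : ℕ) : Responsive (topChoice r q) :=
  ⟨r, q, fun _ => rfl⟩

section Forward
variable [Infinite X] (E : Finset X → Set X)

/-- C2-style computation lemmas for the order with `x` on top, then `w`. -/
lemma c2_lemmas (e : Option X → ℕ) (he : Function.Injective e) (x w : X) (hxw : x ≠ w) :
    ∃ r2 : LinearOrder (Option X),
      (∀ S : Finset X, x ∈ S → topChoice r2 1 S = {x}) ∧
      (∀ S : Finset X, x ∉ S → w ∈ S → topChoice r2 1 S = {w}) ∧
      (∀ S : Finset X, x ∉ S → w ∉ S → topChoice r2 1 S = ∅) := by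
  classical
  set p2 : Option X → ℕ := fun o => o.elim 1 (fun v => if v = x then 3 else if v = w then 2 else 0)
    with hp2
  refine ⟨mkOrder p2 e he, ?_, ?_, ?_⟩
  · intro S hxS
    have hacc : ∀ v : X, (mkOrder p2 e he).lt none (some v) ↔ (v = x ∨ v = w) := by
      intro v
      rw [mkOrder_lt_iff]
      by_cases h1 : v = x
      · simp [hp2, h1]
      · by_cases h2 : v = w <;> simp [hp2, h1, h2, hxw.symm]
    apply Finset.Subset.antisymm
    · intro v hv
      rw [mem_topChoice] at hv
      obtain ⟨hvS, hvacc, hcnt⟩ := hv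
      rw [Finset.mem_singleton]
      rcases (hacc v).1 hvacc with rfl | rfl
      · rfl
      · exfalso
        have hxmem : x ∈ S.filter (fun z => (mkOrder p2 e he).lt none (some z) ∧
            (mkOrder p2 e he).lt (some v) (some z)) := by
          refine Finset.mem_filter.2 ⟨hxS, (hacc x).2 (Or.inl rfl), ?_⟩
          rw [mkOrder_lt_iff]
          left
          simp [hp2, hxw.symm]
        have : 1 ≤ (S.filter (fun z => (mkOrder p2 e he).lt none (some z) ∧
            (mkOrder p2 e he).lt (some v) (some z))).card :=
          Finset.card_pos.2 ⟨x, hxmem⟩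
        omega
    · rw [Finset.singleton_subset_iff, mem_topChoice]
      refine ⟨hxS, (hacc x).2 (Or.inl rfl), ?_⟩
      have hempty : S.filter (fun z => (mkOrder p2 e he).lt none (some z) ∧
          (mkOrder p2 e he).lt (some x) (some z)) = ∅ := by
        rw [Finset.filter_eq_empty_iff]
        rintro z hz ⟨hzacc, hzlt⟩
        rw [mkOrder_lt_iff] at hzlt
        rcases (hacc z).1 hzacc with rfl | rfl
        · simp [hp2] at hzlt
        · simp [hp2, hxw.symm] at hzlt
      rw [hempty]
      simp
  · intro S hxS hwS
    have hfilter : S.filter (fun v => (mkOrder p2 e he).lt none (some v)) = {w} := by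
      ext v
      rw [Finset.mem_filter, mkOrder_lt_iff, Finset.mem_singleton]
      constructor
      · rintro ⟨hvS, hlt⟩
        by_contra hvw
        by_cases h1 : v = x
        · exact hxS (h1 ▸ hvS)
        · simp [hp2, h1, hvw] at hlt
      · rintro rfl
        refine ⟨hwS, ?_⟩
        left
        simp [hp2, hxw.symm]
    rw [topChoice_eq_filter _ (by rw [hfilter]; simp), hfilter]
  · intro S hxS hwS
    have hfilter : S.filter (fun v => (mkOrder p2 e he).lt none (some v)) = ∅ := by
      rw [Finset.filter_eq_empty_iff]
      intro v hvS hlt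
      rw [mkOrder_lt_iff] at hlt
      have h1 : v ≠ x := fun h => hxS (h ▸ hvS)
      have h2 : v ≠ w := fun h => hwS (h ▸ hvS)
      simp [hp2, h1, h2] at hlt
    rw [topChoice_eq_filter _ (by rw [hfilter]; simp), hfilter]
end Forward

section Forward2
variable [Infinite X]

set_option maxHeartbeats 2000000 in
lemma forward_P2 (E : Finset X → Set X)
    (hcontr : ∀ Z : Finset X, E Z ⊆ (Z : Set X))
    (e : Option X → ℕ) (he : Function.Injective e)
    (H : ∀ C1 C2 : Finset X → Finset X, IsChoice C1 → IsChoice C2 →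
        Responsive C1 → Responsive C2 → PathIndependent (lexComp E C1 C2))
    {Z : Finset X} {x y : X} (hx : x ∈ Z) (hxE : x ∉ E Z) (hy : y ∉ Z) :
    x ∉ E (insert y Z) := by
  classical
  by_contra hcon
  obtain ⟨w, hw⟩ := Infinite.exists_notMem_finset (insert y Z)
  have hwZ : w ∉ Z := fun h => hw (Finset.mem_insert_of_mem h)
  have hwy : w ≠ y := fun h => hw (h ▸ Finset.mem_insert_self y Z)
  have hxy : x ≠ y := fun h => hy (h ▸ hx)
  have hxw : x ≠ w := fun h => hwZ (h ▸ hx)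
  set n := Z.card with hn
  set p1 : Option X → ℕ := fun o => o.elim 1 (fun v => if v ∈ insert y Z then 2 else 0) with hp1
  set r1 := mkOrder p1 e he with hr1
  obtain ⟨r2, hC2x, hC2w, hC2e⟩ := c2_lemmas e he x w hxw
  have hacc1 : ∀ v : X, r1.lt none (some v) ↔ v ∈ insert y Z := by
    intro v
    rw [hr1, mkOrder_lt_iff]
    simp only [hp1, Option.elim, Finset.mem_insert]
    by_cases h : v = y ∨ v ∈ Z <;> simp [h]
  have hC1 : ∀ S : Finset X, topChoice r1 (n + 1) S = S.filter (fun v => v ∈ insert y Z) := by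
    intro S
    have hsub : S.filter (fun v => v ∈ insert y Z) ⊆ insert y Z :=
      fun v hv => (Finset.mem_filter.1 hv).2
    refine topChoice_eq_of_card_le r1 _ (fun v => ?_) ?_
    · rw [Finset.mem_filter, hacc1]
    · calc (S.filter (fun v => v ∈ insert y Z)).card ≤ (insert y Z).card :=
            Finset.card_le_card hsub
      _ = n + 1 := by rw [Finset.card_insert_of_notMem hy]
  set C1 : Finset X → Finset X := topChoice r1 (n + 1) with hC1def
  set C2 : Finset X → Finset X := topChoice r2 1 with hC2def
  have hPI := H C1 C2 (topChoice_isChoice r1 (n + 1)) (topChoice_isChoice r2 1)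
    (topChoice_responsive r1 (n + 1)) (topChoice_responsive r2 1) (Z ∪ {w}) {y}
  -- compute L (Z ∪ {w}) = Z
  have hC1a : C1 (Z ∪ {w}) = Z := by
    rw [hC1]
    ext v
    simp only [Finset.mem_filter, Finset.mem_union, Finset.mem_singleton, Finset.mem_insert]
    constructor
    · rintro ⟨hv1 | rfl, hv2⟩
      · exact hv1
      · rcases hv2 with h | h
        · exact absurd h hwy
        · exact absurd h hwZ
    · intro hv
      exact ⟨Or.inl hv, Or.inr hv⟩
  have hLa : lexComp E C1 C2 (Z ∪ {w}) = Z := by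
    rw [lexComp_apply]
    rw [hC1a, hC2x _ (Finset.mem_filter.2 ⟨Finset.mem_union_left _ hx, hxE⟩)]
    exact Finset.union_eq_left.2 (Finset.singleton_subset_iff.2 hx)
  -- compute L {y} = {y}
  have hC1b : C1 {y} = {y} := by
    rw [hC1]
    exact Finset.filter_true_of_mem (fun v hv => by
      rw [Finset.mem_singleton] at hv
      exact hv ▸ Finset.mem_insert_self y Z)
  have hLb : lexComp E C1 C2 {y} = {y} := by
    rw [lexComp_apply]
    rw [hC1b, hC2e, Finset.union_empty]
    · intro hmem
      have := (Finset.mem_filter.1 hmem).1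
      rw [Finset.mem_singleton] at this
      exact hxy this
    · intro hmem
      have := (Finset.mem_filter.1 hmem).1
      rw [Finset.mem_singleton] at this
      exact hwy this
  -- compute L (insert y Z) = insert y Z
  have hC1c : C1 (insert y Z) = insert y Z := by
    rw [hC1]
    exact Finset.filter_true_of_mem (fun v hv => hv)
  have hLc : lexComp E C1 C2 (insert y Z) = insert y Z := by
    rw [lexComp_apply]
    rw [hC1c, hC2e, Finset.union_empty]
    · intro hmem
      exact (Finset.mem_filter.1 hmem).2 hcon
    · intro hmem
      exact hw (Finset.mem_filter.1 hmem).1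
  -- compute L (Z ∪ {w} ∪ {y}) = insert y Z ∪ {w}
  have hC1d : C1 (Z ∪ {w} ∪ {y}) = insert y Z := by
    rw [hC1]
    ext v
    simp only [Finset.mem_filter, Finset.mem_union, Finset.mem_singleton, Finset.mem_insert]
    constructor
    · rintro ⟨_, hv2⟩
      exact hv2
    · rintro (rfl | hv)
      · exact ⟨Or.inr rfl, Or.inl rfl⟩
      · exact ⟨Or.inl (Or.inl hv), Or.inr hv⟩
  have hLd : lexComp E C1 C2 (Z ∪ {w} ∪ {y}) = insert y Z ∪ {w} := by
    rw [lexComp_apply]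
    rw [hC1d, hC2w]
    · intro hmem
      exact (Finset.mem_filter.1 hmem).2 hcon
    · refine Finset.mem_filter.2 ⟨Finset.mem_union_left _ (Finset.mem_union_right _ (Finset.mem_singleton_self w)), ?_⟩
      intro hmem
      exact hw (Finset.mem_coe.1 (hcontr _ hmem))
  -- derive contradiction
  rw [hLa, hLb] at hPI
  have hunion : Z ∪ {y} = insert y Z := by
    ext v; simp [Finset.mem_insert, or_comm]
  rw [hunion, hLc] at hPI
  have : (Z ∪ {w}) ∪ {y} = Z ∪ {w} ∪ {y} := rfl
  rw [hLd] at hPI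
  have : w ∈ insert y Z := by
    rw [← hPI]
    exact Finset.mem_union_right _ (Finset.mem_singleton_self w)
  exact hw this

end Forward2

section Forward3
variable [Infinite X]

set_option maxHeartbeats 1000000 in
lemma forward_P1 (E : Finset X → Set X)
    (hcontr : ∀ Z : Finset X, E Z ⊆ (Z : Set X))
    (e : Option X → ℕ) (he : Function.Injective e)
    (H : ∀ C1 C2 : Finset X → Finset X, IsChoice C1 → IsChoice C2 →
        Responsive C1 → Responsive C2 → PathIndependent (lexComp E C1 C2))
    {Z Z' : Finset X} {x : X} (hcard : Z.card = Z'.card)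
    (hxZ : x ∈ Z) (hxZ' : x ∈ Z') (hxE : x ∉ E Z) :
    x ∉ E Z' := by
  classical
  by_contra hcon
  obtain ⟨w, hw⟩ := Infinite.exists_notMem_finset (Z ∪ Z')
  have hwZ : w ∉ Z := fun h => hw (Finset.mem_union_left _ h)
  have hwZ' : w ∉ Z' := fun h => hw (Finset.mem_union_right _ h)
  have hxw : x ≠ w := fun h => hwZ (h ▸ hxZ)
  set n := Z'.card with hn
  have hn1 : 1 ≤ n := Finset.card_pos.2 ⟨x, hxZ'⟩
  set p1 : Option X → ℕ := fun o => o.elim 1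
    (fun v => if v ∈ Z' then (if v ∈ Z then 3 else 4) else if v ∈ Z then 2 else 0) with hp1
  set r1 := mkOrder p1 e he with hr1
  obtain ⟨r2, hC2x, hC2w, hC2e⟩ := c2_lemmas e he x w hxw
  have hacc1 : ∀ v : X, r1.lt none (some v) ↔ v ∈ Z ∪ Z' := by
    intro v
    rw [hr1, mkOrder_lt_iff]
    simp only [hp1, Option.elim, Finset.mem_union]
    by_cases h1 : v ∈ Z' <;> by_cases h2 : v ∈ Z <;> simp [h1, h2]
  -- the three "small" computations
  have hfull : ∀ S A : Finset X, A ⊆ Z ∪ Z' → (∀ v, v ∈ A ↔ v ∈ S ∧ v ∈ Z ∪ Z') →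
      A.card ≤ n → topChoice r1 n S = A := by
    intro S A _ hA hAc
    refine topChoice_eq_of_card_le r1 A (fun v => ?_) hAc
    rw [hA v, hacc1]
  have hC1Z : topChoice r1 n Z = Z := by
    refine hfull Z Z Finset.subset_union_left (fun v => ?_) (le_of_eq hcard)
    constructor
    · intro h; exact ⟨h, Finset.mem_union_left _ h⟩
    · exact fun h => h.1
  have hC1Zw : topChoice r1 n (Z ∪ {w}) = Z := by
    refine hfull _ Z Finset.subset_union_left (fun v => ?_) (le_of_eq hcard)
    constructor
    · intro h; exact ⟨Finset.mem_union_left _ h, Finset.mem_union_left _ h⟩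
    · rintro ⟨h1, h2⟩
      rcases Finset.mem_union.1 h1 with h | h
      · exact h
      · rw [Finset.mem_singleton] at h
        subst h
        exact absurd h2 (by simp [hwZ, hwZ'])
  have hC1Z' : topChoice r1 n Z' = Z' := by
    refine hfull Z' Z' Finset.subset_union_right (fun v => ?_) le_rfl
    constructor
    · intro h; exact ⟨h, Finset.mem_union_right _ h⟩
    · exact fun h => h.1
  -- the tier computation
  have htier : ∀ S : Finset X, Z' ⊆ S → S ⊆ (Z ∪ Z') ∪ {w} → topChoice r1 n S = Z' := by
    intro S hZ'S hSsub
    ext v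
    rw [mem_topChoice]
    constructor
    · rintro ⟨hvS, hvacc, hcnt⟩
      by_contra hvZ'
      have hvZ : v ∈ Z := by
        rcases Finset.mem_union.1 ((hacc1 v).1 hvacc) with h | h
        · exact h
        · exact absurd h hvZ'
      refine absurd hcnt (not_lt.2 ?_)
      rw [hn]
      refine Finset.card_le_card ?_
      intro s hs
      simp only [Finset.mem_filter]
      refine ⟨hZ'S hs, (hacc1 s).2 (Finset.mem_union_right _ hs), ?_⟩
      rw [hr1, mkOrder_lt_iff]
      left
      simp only [hp1, Option.elim]
      rw [if_neg hvZ', if_pos hvZ, if_pos hs]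
      by_cases h : s ∈ Z <;> simp [h]
    · intro hvZ'
      refine ⟨hZ'S hvZ', (hacc1 v).2 (Finset.mem_union_right _ hvZ'), ?_⟩
      have h2 : (Z'.erase v).card = Z'.card - 1 := Finset.card_erase_of_mem hvZ'
      refine lt_of_le_of_lt (Finset.card_le_card (?_ : _ ⊆ Z'.erase v)) (by omega)
      intro z hz
      simp only [Finset.mem_filter] at hz
      obtain ⟨hzS, hzacc, hzlt⟩ := hz
      have hzZ' : z ∈ Z' := by
        by_contra h
        have hzZ : z ∈ Z := by
          rcases Finset.mem_union.1 ((hacc1 z).1 hzacc) with h' | h'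
          · exact h'
          · exact absurd h' h
        rw [hr1, mkOrder_lt_iff] at hzlt
        simp only [hp1, Option.elim] at hzlt
        rw [if_pos hvZ', if_neg h, if_pos hzZ] at hzlt
        by_cases h2 : v ∈ Z
        · rw [if_pos h2] at hzlt; omega
        · rw [if_neg h2] at hzlt; omega
      refine Finset.mem_erase.2 ⟨fun h => ?_, hzZ'⟩
      subst h
      rw [hr1, mkOrder_lt_iff] at hzlt
      omega
  set C1 : Finset X → Finset X := topChoice r1 n with hC1def
  set C2 : Finset X → Finset X := topChoice r2 1 with hC2def
  have hPI := H C1 C2 (topChoice_isChoice r1 n) (topChoice_isChoice r2 1)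
    (topChoice_responsive r1 n) (topChoice_responsive r2 1) (Z ∪ {w}) Z'
  -- L (Z ∪ {w}) = Z
  have hLa : lexComp E C1 C2 (Z ∪ {w}) = Z := by
    rw [lexComp_apply, hC1Zw, hC2x _ (Finset.mem_filter.2 ⟨Finset.mem_union_left _ hxZ, hxE⟩)]
    exact Finset.union_eq_left.2 (Finset.singleton_subset_iff.2 hxZ)
  -- L Z' = Z'
  have hLb : lexComp E C1 C2 Z' = Z' := by
    rw [lexComp_apply, hC1Z', hC2e, Finset.union_empty]
    · exact fun hmem => (Finset.mem_filter.1 hmem).2 hcon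
    · exact fun hmem => hwZ' (Finset.mem_filter.1 hmem).1
  -- L (Z ∪ Z') = Z'
  have hLc : lexComp E C1 C2 (Z ∪ Z') = Z' := by
    have h1 : C1 (Z ∪ Z') = Z' := htier _ Finset.subset_union_right
      (Finset.subset_union_left)
    rw [lexComp_apply, h1, hC2e, Finset.union_empty]
    · exact fun hmem => (Finset.mem_filter.1 hmem).2 hcon
    · exact fun hmem => hw (Finset.mem_filter.1 hmem).1
  -- L (Z ∪ {w} ∪ Z') = Z' ∪ {w}
  have hLd : lexComp E C1 C2 (Z ∪ {w} ∪ Z') = Z' ∪ {w} := by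
    have h1 : C1 (Z ∪ {w} ∪ Z') = Z' := by
      refine htier _ Finset.subset_union_right (fun v hv => ?_)
      rcases Finset.mem_union.1 hv with h | h
      · rcases Finset.mem_union.1 h with h' | h'
        · exact Finset.mem_union_left _ (Finset.mem_union_left _ h')
        · exact Finset.mem_union_right _ h'
      · exact Finset.mem_union_left _ (Finset.mem_union_right _ h)
    rw [lexComp_apply, h1, hC2w]
    · exact fun hmem => (Finset.mem_filter.1 hmem).2 hcon
    · refine Finset.mem_filter.2 ⟨Finset.mem_union_left _
        (Finset.mem_union_right _ (Finset.mem_singleton_self w)), ?_⟩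
      exact fun hmem => hwZ' (Finset.mem_coe.1 (hcontr _ hmem))
  rw [hLa, hLb, hLc, hLd] at hPI
  have : w ∈ Z' := by
    rw [← hPI]
    exact Finset.mem_union_right _ (Finset.mem_singleton_self w)
  exact hwZ' this

end Forward3

end Helpers

/-- **Proposition 2 (contractions).** If `E` is a contraction, then `L_E`
preserves path independence over responsive choice functions iff `I \ E`
(i.e. `Z ↦ Z \ E(Z)`) is cardinal-linear. -/
theorem lexComp_contraction_preserves_pi_iff_cardinalLinear
    {X : Type*} [Countable X] [Infinite X] (E : Finset X → Set X)
    (hcontr : ∀ Z : Finset X, E Z ⊆ (Z : Set X)) :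
    (∀ C1 C2 : Finset X → Finset X, IsChoice C1 → IsChoice C2 →
        Responsive C1 → Responsive C2 → PathIndependent (lexComp E C1 C2)) ↔
      CardinalLinear (fun Z : Finset X => (Z : Set X) \ E Z) := by
  constructor
  · intro H
    obtain ⟨e, he⟩ := Countable.exists_injective_nat (Option X)
    refine ⟨fun n => {x | ∃ Z : Finset X, Z.card = n ∧ x ∈ Z ∧ x ∉ E Z}, ?_, ?_, ?_⟩
    · ext x
      simp only [Set.mem_setOf_eq, Set.mem_empty_iff_false, iff_false]
      rintro ⟨Z, hZ, hx, -⟩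
      rw [Finset.card_eq_zero] at hZ
      exact absurd hx (hZ ▸ Finset.notMem_empty x)
    · apply monotone_nat_of_le_succ
      intro n x hx
      obtain ⟨Z, hZc, hxZ, hxE⟩ := hx
      obtain ⟨y, hy⟩ := Infinite.exists_notMem_finset Z
      exact ⟨insert y Z, by rw [Finset.card_insert_of_notMem hy, hZc],
        Finset.mem_insert_of_mem hxZ, forward_P2 E hcontr e he H hxZ hxE hy⟩
    · intro Z
      ext x
      simp only [Set.mem_diff, Set.mem_inter_iff, Finset.mem_coe, Set.mem_setOf_eq]
      constructor
      · rintro ⟨hxZ, hxE⟩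
        exact ⟨hxZ, Z, rfl, hxZ, hxE⟩
      · rintro ⟨hxZ, Z', hZ'c, hxZ', hxE'⟩
        exact ⟨hxZ, forward_P1 E hcontr e he H hZ'c hxZ' hxZ hxE'⟩
  · rintro ⟨T, hT0, hmono, hT⟩ C1 C2 _ _ ⟨r1, q1, hR1⟩ ⟨r2, q2, hR2⟩
    exact lex_backward E hcontr T hmono hT r1 r2 q1 q2 C1 C2 hR1 hR2
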